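/- arXiv:1106.3099 — 3 statements merged into one kernel-verified Lean document; each statement's English description precedes it below -/
import Mathlib

section
/- Let K be a field of characteristic different from 2 and 3 and L a field extension of K. Let a, b ∈ K with a ≠ 0, b ≠ 0 and 4a³ + 27b² ≠ 0, and let a′, b′ ∈ K with 4a′³ + 27b′² ≠ 0. If the base changes to L of E_{a,b} and E_{a′,b′} are isomorphic over L (related by an admissible change of variables over L), then there exists f ∈ Kˣ such that a′ = f²·a and b′ = f³·b, and f becomes a square in L. -/
/-- Let `K` be a field of characteristic different from 2 and 3 and `L` a field
extension of `K`. Let `a, b ∈ K` with `a ≠ 0`, `b ≠ 0` and `4a³ + 27b² ≠ 0`, and let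
`a′, b′ ∈ K` with `4a′³ + 27b′² ≠ 0`. If the base changes to `L` of `E_{a,b}` and `E_{a′,b′}`
are isomorphic over `L` (related by an admissible change of variables over `L`), then there
exists `f ∈ Kˣ` such that `a′ = f²·a` and `b′ = f³·b`, and `f` becomes a square in `L`. -/
theorem stmt_4 (K L : Type*) [Field K] [Field L] [Algebra K L]
    (h2 : (2 : K) ≠ 0) (h3 : (3 : K) ≠ 0)
    (a b : K) (ha : a ≠ 0) (hb : b ≠ 0) (hΔ : 4 * a ^ 3 + 27 * b ^ 2 ≠ 0)
    (a' b' : K) (hΔ' : 4 * a' ^ 3 + 27 * b' ^ 2 ≠ 0)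
    (h : ∃ e : WeierstrassCurve.VariableChange L,
      e • ((⟨0, 0, 0, a, b⟩ : WeierstrassCurve K).baseChange L)
        = (⟨0, 0, 0, a', b'⟩ : WeierstrassCurve K).baseChange L) :
    ∃ f : Kˣ, a' = (f : K) ^ 2 * a ∧ b' = (f : K) ^ 3 * b ∧
      IsSquare (algebraMap K L (f : K)) := by
  obtain ⟨⟨u, r, s, t⟩, he⟩ := h
  set ι := algebraMap K L with hι
  have hinj : Function.Injective ι := (algebraMap K L).injective
  have h2L : (2 : L) ≠ 0 := by
    rw [show (2:L) = ι 2 from (map_ofNat ι 2).symm]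
    exact (map_ne_zero_iff ι hinj).mpr h2
  have h3L : (3 : L) ≠ 0 := by
    rw [show (3:L) = ι 3 from (map_ofNat ι 3).symm]
    exact (map_ne_zero_iff ι hinj).mpr h3
  have h1 := congrArg WeierstrassCurve.a₁ he
  have hA2 := congrArg WeierstrassCurve.a₂ he
  have hA3 := congrArg WeierstrassCurve.a₃ he
  have hA4 := congrArg WeierstrassCurve.a₄ he
  have hA6 := congrArg WeierstrassCurve.a₆ he
  simp [WeierstrassCurve.variableChange_a₁, WeierstrassCurve.variableChange_a₂, WeierstrassCurve.variableChange_a₃, WeierstrassCurve.variableChange_a₄, WeierstrassCurve.variableChange_a₆, WeierstrassCurve.baseChange, WeierstrassCurve.map] at h1 hA2 hA3 hA4 hA6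
  rcases h1 with h1|hs
  · exact absurd h1 h2L
  rcases hA3 with h1'|ht
  · exact absurd h1' h2L
  subst hs; subst ht
  have hr : r = 0 := by
    have h3r : 3 * r = 0 := by linear_combination hA2
    rcases mul_eq_zero.mp h3r with h|h
    · exact absurd h h3L
    · exact h
  subst hr
  simp only [mul_zero, zero_mul, add_zero, zero_pow, sub_zero, ne_eq, OfNat.ofNat_ne_zero,
    not_false_eq_true] at hA4 hA6
  simp only [← hι] at hA4 hA6
  have hu : (u : L) ≠ 0 := u.ne_zero
  have hιa : ι a ≠ 0 := (map_ne_zero_iff ι hinj).mpr ha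
  have hιb : ι b ≠ 0 := (map_ne_zero_iff ι hinj).mpr hb
  have hιa' : ι a' ≠ 0 := by
    rw [← hA4]
    exact mul_ne_zero (inv_ne_zero (pow_ne_zero 4 hu)) hιa
  have hιb' : ι b' ≠ 0 := by
    rw [← hA6]
    exact mul_ne_zero (inv_ne_zero (pow_ne_zero 6 hu)) hιb
  have ha' : a' ≠ 0 := fun h => hιa' (by simp [h])
  have hb' : b' ≠ 0 := fun h => hιb' (by simp [h])
  set f0 : K := a * b' / (a' * b) with hf0def
  have hf0 : f0 ≠ 0 := by
    apply div_ne_zero (mul_ne_zero ha hb') (mul_ne_zero ha' hb)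
  have key : ι f0 = ((u : L) ^ 2)⁻¹ := by
    rw [hf0def, map_div₀, map_mul, map_mul, ← hA4, ← hA6]
    field_simp
  refine ⟨Units.mk0 f0 hf0, ?_, ?_, ?_⟩
  · apply hinj
    rw [map_mul, map_pow]
    simp only [Units.val_mk0]
    rw [key, ← hA4]
    field_simp
  · apply hinj
    rw [map_mul, map_pow]
    simp only [Units.val_mk0]
    rw [key, ← hA6]
    field_simp
  · refine ⟨((u⁻¹ : Lˣ) : L), ?_⟩
    simp only [Units.val_mk0]
    rw [key]
    simp [pow_two]
end

section
/- Let K be a field of characteristic different from 2 and 3, let a, b ∈ K with a ≠ 0 and b ≠ 0, and let f, g ∈ Kˣ. Then the twisted curves E_{f²a, f³b} and E_{g²a, g³b} are isomorphic over K (related by an admissible change of variables over K) if and only if there exists c ∈ Kˣ with f = g·c². -/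
/-- Let `K` be a field of characteristic different from 2 and 3, let
`a, b ∈ K` with `a ≠ 0` and `b ≠ 0`, and let `f, g ∈ Kˣ`. Then the twisted curves
`E_{f²a, f³b}` and `E_{g²a, g³b}` are isomorphic over `K` (related by an admissible change of
variables over `K`) if and only if there exists `c ∈ Kˣ` with `f = g·c²`. -/
theorem stmt_6 (K : Type*) [Field K] (h2 : (2 : K) ≠ 0) (h3 : (3 : K) ≠ 0)
    (a b : K) (ha : a ≠ 0) (hb : b ≠ 0) (f g : Kˣ) :
    (∃ e : WeierstrassCurve.VariableChange K,
      e • (⟨0, 0, 0, (f : K) ^ 2 * a, (f : K) ^ 3 * b⟩ : WeierstrassCurve K)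
        = (⟨0, 0, 0, (g : K) ^ 2 * a, (g : K) ^ 3 * b⟩ : WeierstrassCurve K)) ↔
      ∃ c : Kˣ, f = g * c ^ 2 := by
  constructor
  · rintro ⟨⟨u, r, s, t⟩, h⟩
    rw [WeierstrassCurve.mk.injEq] at h
    obtain ⟨h1, hA2, hA3, hA4, hA6⟩ := h
    simp only [WeierstrassCurve.variableChange_def, Units.val_inv_eq_inv_val] at h1 hA2 hA3 hA4 hA6
    have hui : ((u⁻¹ : Kˣ) : K) = (u : K)⁻¹ := by rw [← Units.val_inv_eq_inv_val]
    field_simp [hui] at h1 hA2 hA3 hA4 hA6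
    have hs : s = 0 := (mul_eq_zero.mp (show 2 * s = 0 by linear_combination h1)).resolve_left h2
    have ht : t = 0 := (mul_eq_zero.mp (show 2 * t = 0 by linear_combination hA3)).resolve_left h2
    subst hs ht
    have hr : r = 0 := by
      have h3r : 3 * r = 0 := by linear_combination hA2
      exact (mul_eq_zero.mp h3r).resolve_left h3
    subst hr
    have h4 : (f : K) ^ 2 = (u : K) ^ 4 * (g : K) ^ 2 :=
      mul_right_cancel₀ ha (by linear_combination hA4)
    have h6 : (f : K) ^ 3 = (u : K) ^ 6 * (g : K) ^ 3 :=
      mul_right_cancel₀ hb (by linear_combination hA6)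
    have key : (f : K) = (g : K) * (u : K) ^ 2 :=
      mul_right_cancel₀ (pow_ne_zero 2 f.ne_zero)
        (show (f : K) * (f : K) ^ 2 = ((g : K) * (u : K) ^ 2) * (f : K) ^ 2 by
          linear_combination h6 - (g : K) * (u : K) ^ 2 * h4)
    exact ⟨u, Units.ext (by push_cast; exact key)⟩
  · rintro ⟨c, rfl⟩
    refine ⟨⟨c, 0, 0, 0⟩, ?_⟩
    ext <;> simp [WeierstrassCurve.variableChange_def, Units.val_inv_eq_inv_val] <;>
      field_simp <;> ring
end

section
/- Let 𝔽_q be a finite field of odd cardinality q and let N ∈ 𝔽_q[T] be monic, squarefree, of degree ≥ 1. Then for every natural number e with e ≥ deg N, the complete character sum B_e = ∑_{f monic, deg f = e} (f/N) over all monic polynomials f ∈ 𝔽_q[T] of degree e vanishes: B_e = 0. -/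
open Polynomial

/-- The Legendre symbol `(f/π)` of `f ∈ 𝔽_q[T]` at a monic irreducible `π`: the quadratic
character of the residue field `𝔽_q[T]/(π)` evaluated at the image of `f`, i.e. `0` if the
image of `f` is zero, `1` if it is a nonzero square, and `-1` if it is a nonsquare. -/
noncomputable def polyLegendreSym {F : Type*} [Field F] [Fintype F] (π f : F[X]) : ℤ :=
  open scoped Classical in
  if (Ideal.Quotient.mk (Ideal.span {π}) f) = 0 then 0
  else if IsSquare (Ideal.Quotient.mk (Ideal.span {π}) f) then 1 else -1

/-- The Jacobi symbol `(f/N)` for a (monic squarefree) modulus `N ∈ 𝔽_q[T]`: the product over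
the distinct monic irreducible factors `π` of `N` of the quadratic character of the residue
field `𝔽_q[T]/(π)` evaluated at the image of `f`. -/
noncomputable def polyJacobiSym {F : Type*} [Field F] [Fintype F] [DecidableEq F]
    (f N : F[X]) : ℤ :=
  ∏ π ∈ (UniqueFactorizationMonoid.normalizedFactors N).toFinset, polyLegendreSym π f

section Aux

variable {F : Type*} [Field F] [Fintype F]

lemma polyLegendreSym_congr {π f g : F[X]}
    (h : Ideal.Quotient.mk (Ideal.span {π}) f = Ideal.Quotient.mk (Ideal.span {π}) g) :
    polyLegendreSym π f = polyLegendreSym π g := by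
  unfold polyLegendreSym
  rw [h]

/-- There is a "nonsquare" `S` modulo an irreducible `π`, and multiplying by it flips the
Legendre symbol. -/
lemma exists_flip (hq : Odd (Fintype.card F)) {π : F[X]} (hπ : Irreducible π) :
    ∃ S : F[X], (Ideal.Quotient.mk (Ideal.span {π}) S ≠ 0) ∧
      ∀ x : F[X], polyLegendreSym π (S * x) = - polyLegendreSym π x := by
  haveI hmax : (Ideal.span {π}).IsMaximal := PrincipalIdealRing.isMaximal_of_irreducible hπ
  letI : Field (F[X] ⧸ Ideal.span {π}) := Ideal.Quotient.field _
  haveI : Module.Finite F (AdjoinRoot π) :=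
    Module.Finite.of_basis (AdjoinRoot.powerBasis hπ.ne_zero).basis
  haveI : Finite (AdjoinRoot π) := Module.finite_of_finite F
  haveI : Finite (F[X] ⧸ Ideal.span {π}) :=
    inferInstanceAs (Finite (AdjoinRoot π))
  letI : Fintype (F[X] ⧸ Ideal.span {π}) := Fintype.ofFinite _
  letI : DecidableEq (F[X] ⧸ Ideal.span {π}) := Classical.decEq _
  have hchar : ringChar (F[X] ⧸ Ideal.span {π}) ≠ 2 := by
    haveI : CharP (F[X] ⧸ Ideal.span {π}) (ringChar F) :=
      charP_of_injective_ringHom (algebraMap F (F[X] ⧸ Ideal.span {π})).injective (ringChar F)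
    have h1 : ringChar (F[X] ⧸ Ideal.span {π}) = ringChar F := ringChar.eq _ (ringChar F)
    rw [h1]
    intro h2
    have := FiniteField.even_card_of_char_two h2
    have := Nat.odd_iff.mp hq
    omega
  have key : ∀ h : F[X],
      polyLegendreSym π h
        = quadraticChar (F[X] ⧸ Ideal.span {π}) (Ideal.Quotient.mk (Ideal.span {π}) h) := by
    intro h
    rw [quadraticChar_apply, quadraticCharFun]
    unfold polyLegendreSym
    split_ifs <;> rfl
  obtain ⟨s, hs⟩ := FiniteField.exists_nonsquare hchar
  have hs0 : s ≠ 0 := fun h => hs (h ▸ ⟨0, by simp⟩)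
  obtain ⟨S, hS⟩ := Ideal.Quotient.mk_surjective (I := Ideal.span {π}) s
  refine ⟨S, by rw [hS]; exact hs0, fun x => ?_⟩
  rw [key, key, map_mul, map_mul, hS, quadraticChar_neg_one_iff_not_isSquare.mpr hs]
  ring

lemma polyJacobiSym_congr [DecidableEq F] {N f g : F[X]}
    (h : Ideal.Quotient.mk (Ideal.span {N}) f = Ideal.Quotient.mk (Ideal.span {N}) g) :
    polyJacobiSym f N = polyJacobiSym g N := by
  unfold polyJacobiSym
  refine Finset.prod_congr rfl fun π hπ => polyLegendreSym_congr ?_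
  rw [Multiset.mem_toFinset] at hπ
  have hdvd : π ∣ N := UniqueFactorizationMonoid.dvd_of_mem_normalizedFactors hπ
  rw [Ideal.Quotient.eq, Ideal.mem_span_singleton] at h ⊢
  exact hdvd.trans h

end Aux

/-- Let `𝔽_q` be a finite field of odd cardinality `q` and let `N ∈ 𝔽_q[T]`
be monic, squarefree, of degree `≥ 1`. Then for every natural number `e` with `e ≥ deg N`, the
complete character sum `B_e = ∑_{f monic, deg f = e} (f/N)` over all monic polynomials
`f ∈ 𝔽_q[T]` of degree `e` vanishes: `B_e = 0`. -/
theorem stmt_9 (F : Type*) [Field F] [Fintype F] [DecidableEq F]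
    (hq : Odd (Fintype.card F))
    (N : F[X]) (hN : N.Monic) (hNsf : Squarefree N) (hNdeg : 1 ≤ N.natDegree)
    (e : ℕ) (he : N.natDegree ≤ e) :
    ∑ᶠ f ∈ {f : F[X] | f.Monic ∧ f.natDegree = e}, polyJacobiSym f N = 0 := by
  classical
  set d := N.natDegree with hd
  have hN0 : N ≠ 0 := hN.ne_zero
  have hNdegree : N.degree = (d : ℕ) := degree_eq_natDegree hN0
  -- finiteness of the index sets
  have hdegLT : ∀ n : ℕ, (↑(degreeLT F n) : Set F[X]).Finite := by
    intro n
    haveI : Finite (degreeLT F n) := Finite.of_equiv _ (degreeLTEquiv F n).toEquiv.symm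
    exact Set.toFinite _
  have hfin : ∀ m : ℕ, {f : F[X] | f.Monic ∧ f.natDegree = m}.Finite := by
    intro m
    refine (hdegLT (m + 1)).subset ?_
    intro f hf
    simp only [SetLike.mem_coe, mem_degreeLT]
    calc degree f ≤ (f.natDegree : WithBot ℕ) := degree_le_natDegree
    _ < ((m + 1 : ℕ) : WithBot ℕ) := by
        rw [hf.2]
        exact_mod_cast Nat.lt_succ_self m
  rw [finsum_mem_eq_finite_toFinset_sum _ (hfin e)]
  set A := (hfin (e - d)).toFinset with hA
  set B := (hdegLT d).toFinset with hB
  -- the inner sum over residues (representatives of degree < d) vanishes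
  have hinner : ∑ r ∈ B, polyJacobiSym r N = 0 := by
    have hNunit : ¬ IsUnit N := by
      intro h
      have := Polynomial.natDegree_eq_zero_of_isUnit h
      omega
    set T := (UniqueFactorizationMonoid.normalizedFactors N).toFinset with hT
    have hassoc := UniqueFactorizationMonoid.prod_normalizedFactors hN0
    have hfac_ne : UniqueFactorizationMonoid.normalizedFactors N ≠ 0 := by
      intro h0
      rw [h0, Multiset.prod_zero] at hassoc
      exact hNunit (associated_one_iff_isUnit.mp hassoc.symm)
    obtain ⟨π₀, hπ₀mem⟩ := Multiset.exists_mem_of_ne_zero hfac_ne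
    have hπ₀irr : Irreducible π₀ :=
      UniqueFactorizationMonoid.irreducible_of_normalized_factor _ hπ₀mem
    obtain ⟨M, hMeq⟩ := UniqueFactorizationMonoid.dvd_of_mem_normalizedFactors hπ₀mem
    have hπ₀M : ¬ π₀ ∣ M := by
      rintro ⟨c, hc⟩
      exact hπ₀irr.not_isUnit (hNsf π₀ ⟨c, by rw [hMeq, hc]; ring⟩)
    obtain ⟨a, b, hab⟩ := hπ₀irr.coprime_iff_not_dvd.mpr hπ₀M
    obtain ⟨S, hS0, hSflip⟩ := exists_flip hq hπ₀irr
    set u := S * (b * M) + a * π₀ with hu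
    have humk : Ideal.Quotient.mk (Ideal.span {π₀}) u = Ideal.Quotient.mk (Ideal.span {π₀}) S := by
      rw [Ideal.Quotient.eq, Ideal.mem_span_singleton]
      exact ⟨a - S * a, by linear_combination S * hab⟩
    have hother : ∀ π ∈ T, π ≠ π₀ → Ideal.Quotient.mk (Ideal.span {π}) u = 1 := by
      intro π hπT hne
      rw [hT, Multiset.mem_toFinset] at hπT
      have hπpr : Prime π := UniqueFactorizationMonoid.prime_of_normalized_factor _ hπT
      have hππ₀ : ¬ π ∣ π₀ := by
        intro hdvd
        have hassoc' : Associated π π₀ := hπpr.irreducible.associated_of_dvd hπ₀irr hdvd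
        refine hne ?_
        rw [← UniqueFactorizationMonoid.normalize_normalized_factor _ hπT,
          ← UniqueFactorizationMonoid.normalize_normalized_factor _ hπ₀mem]
        exact normalize_eq_normalize hassoc'.dvd hassoc'.symm.dvd
      have hπM : π ∣ M := by
        have hd' : π ∣ π₀ * M := by
          rw [← hMeq]
          exact UniqueFactorizationMonoid.dvd_of_mem_normalizedFactors hπT
        rcases (hπpr.dvd_mul).mp hd' with h | h
        · exact absurd h hππ₀
        · exact h
      obtain ⟨m, hm⟩ := hπM
      rw [← map_one (Ideal.Quotient.mk (Ideal.span {π})), Ideal.Quotient.eq,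
        Ideal.mem_span_singleton]
      exact ⟨(S - 1) * b * m, by linear_combination hab + (S - 1) * b * hm⟩
    have hndvd : ∀ π ∈ UniqueFactorizationMonoid.normalizedFactors N, ¬ π ∣ u := by
      intro π hπ hdvd
      have h0 : Ideal.Quotient.mk (Ideal.span {π}) u = 0 :=
        (Ideal.Quotient.eq_zero_iff_dvd π u).mpr hdvd
      by_cases hne : π = π₀
      · subst hne
        rw [humk] at h0
        exact hS0 h0
      · have h1 := hother π (by rw [hT, Multiset.mem_toFinset]; exact hπ) hne
        rw [h0] at h1
        haveI := (Ideal.Quotient.nontrivial_iff (I := Ideal.span {π})).mpr (by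
          rw [Ne, Ideal.span_singleton_eq_top]
          exact (UniqueFactorizationMonoid.irreducible_of_normalized_factor _ hπ).not_isUnit)
        exact zero_ne_one h1
    have hnodup : (UniqueFactorizationMonoid.normalizedFactors N).Nodup :=
      (UniqueFactorizationMonoid.squarefree_iff_nodup_normalizedFactors hN0).mp hNsf
    have hprodT : ∏ π ∈ T, π = (UniqueFactorizationMonoid.normalizedFactors N).prod := by
      rw [hT, Finset.prod_eq_multiset_prod, Multiset.toFinset_val,
        Multiset.dedup_eq_self.mpr hnodup, Multiset.map_id']
    have hcopNu : IsCoprime N u := by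
      have h1 : IsCoprime (∏ π ∈ T, π) u := by
        refine IsCoprime.prod_left fun π hπ => ?_
        rw [hT, Multiset.mem_toFinset] at hπ
        exact ((UniqueFactorizationMonoid.irreducible_of_normalized_factor _
          hπ).coprime_iff_not_dvd).mpr (hndvd π hπ)
      rw [hprodT] at h1
      obtain ⟨w, hw⟩ := hassoc
      rw [← hw]
      exact h1.mul_left ⟨(↑w⁻¹ : F[X]), 0, by simp⟩
    obtain ⟨c, v, hcv⟩ := hcopNu
    have hvu : Ideal.Quotient.mk (Ideal.span {N}) (v * u) = 1 := by
      rw [← map_one (Ideal.Quotient.mk (Ideal.span {N})), Ideal.Quotient.eq,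
        Ideal.mem_span_singleton]
      exact ⟨-c, by linear_combination hcv⟩
    have hmodmk : ∀ x : F[X], Ideal.Quotient.mk (Ideal.span {N}) (x %ₘ N)
        = Ideal.Quotient.mk (Ideal.span {N}) x := by
      intro x
      rw [Ideal.Quotient.eq, Ideal.mem_span_singleton]
      exact ⟨-(x /ₘ N), by linear_combination modByMonic_add_div x N⟩
    have hmkmul : ∀ x y : F[X], Ideal.Quotient.mk (Ideal.span {N}) ((x * (y %ₘ N)) %ₘ N)
        = Ideal.Quotient.mk (Ideal.span {N}) (x * y) := by
      intro x y
      rw [hmodmk, map_mul, hmodmk, ← map_mul]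
    have hBmem : ∀ x : F[X], x %ₘ N ∈ B := by
      intro x
      rw [hB, Set.Finite.mem_toFinset]
      exact mem_degreeLT.mpr (by rw [← hNdegree]; exact degree_modByMonic_lt x hN)
    have hmkuniq : ∀ x y, x ∈ B → y ∈ B →
        Ideal.Quotient.mk (Ideal.span {N}) x = Ideal.Quotient.mk (Ideal.span {N}) y → x = y := by
      intro x y hx hy hxy
      rw [hB, Set.Finite.mem_toFinset] at hx hy
      have hdvd : N ∣ (x - y) := by
        rw [← Ideal.mem_span_singleton, ← Ideal.Quotient.eq]
        exact hxy
      have hlt : degree (x - y) < degree N := by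
        rw [hNdegree]
        exact lt_of_le_of_lt (degree_sub_le x y)
          (max_lt (mem_degreeLT.mp hx) (mem_degreeLT.mp hy))
      exact sub_eq_zero.mp (eq_zero_of_dvd_of_degree_lt hdvd hlt)
    have hLI : ∀ r ∈ B, (u * ((v * r) %ₘ N)) %ₘ N = r := by
      intro r hr
      refine hmkuniq _ _ (hBmem _) hr ?_
      rw [hmkmul u (v * r), show u * (v * r) = (v * u) * r by ring, map_mul, hvu, one_mul]
    have hRI : ∀ r ∈ B, (v * ((u * r) %ₘ N)) %ₘ N = r := by
      intro r hr
      refine hmkuniq _ _ (hBmem _) hr ?_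
      rw [hmkmul v (u * r), show v * (u * r) = (v * u) * r by ring, map_mul, hvu, one_mul]
    have hπ₀T : π₀ ∈ T := by rw [hT, Multiset.mem_toFinset]; exact hπ₀mem
    have hflipJ : ∀ r : F[X], polyJacobiSym (u * r) N = - polyJacobiSym r N := by
      intro r
      unfold polyJacobiSym
      rw [← hT, ← Finset.mul_prod_erase _ _ hπ₀T, ← Finset.mul_prod_erase _ _ hπ₀T]
      have h1 : polyLegendreSym π₀ (u * r) = - polyLegendreSym π₀ r := by
        have hcg : Ideal.Quotient.mk (Ideal.span {π₀}) (u * r)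
            = Ideal.Quotient.mk (Ideal.span {π₀}) (S * r) := by
          rw [map_mul, map_mul, humk]
        rw [polyLegendreSym_congr hcg, hSflip r]
      have h2 : ∀ π ∈ T.erase π₀, polyLegendreSym π (u * r) = polyLegendreSym π r := by
        intro π hπ
        have hcg : Ideal.Quotient.mk (Ideal.span {π}) (u * r)
            = Ideal.Quotient.mk (Ideal.span {π}) r := by
          rw [map_mul, hother π (Finset.mem_of_mem_erase hπ) (Finset.ne_of_mem_erase hπ),
            one_mul]
        exact polyLegendreSym_congr hcg
      rw [Finset.prod_congr rfl h2, h1]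
      ring
    have hre : ∑ r ∈ B, polyJacobiSym r N = ∑ r ∈ B, polyJacobiSym ((u * r) %ₘ N) N := by
      refine Finset.sum_nbij' (fun r => (v * r) %ₘ N) (fun r => (u * r) %ₘ N)
        (fun r _ => hBmem _) (fun r _ => hBmem _) hLI hRI ?_
      intro r hr
      show polyJacobiSym r N = polyJacobiSym ((u * ((v * r) %ₘ N)) %ₘ N) N
      rw [hLI r hr]
    have hfinal : ∑ r ∈ B, polyJacobiSym r N = - ∑ r ∈ B, polyJacobiSym r N := by
      calc ∑ r ∈ B, polyJacobiSym r N = ∑ r ∈ B, polyJacobiSym ((u * r) %ₘ N) N := hre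
      _ = ∑ r ∈ B, polyJacobiSym (u * r) N :=
          Finset.sum_congr rfl fun r _ => polyJacobiSym_congr (hmodmk _)
      _ = ∑ r ∈ B, - polyJacobiSym r N := Finset.sum_congr rfl fun r _ => hflipJ r
      _ = - ∑ r ∈ B, polyJacobiSym r N := by rw [Finset.sum_neg_distrib]
    omega
  -- reindex the full sum via Euclidean division
  have step1 : ∑ f ∈ (hfin e).toFinset, polyJacobiSym f N
      = ∑ p ∈ A ×ˢ B, polyJacobiSym (p.1 * N + p.2) N := by
    refine Finset.sum_nbij' (fun f => (f /ₘ N, f %ₘ N)) (fun p => p.1 * N + p.2)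
      ?_ ?_ ?_ ?_ ?_
    · intro f hf
      rw [Set.Finite.mem_toFinset] at hf
      obtain ⟨hfm, hfd⟩ := hf
      have hdle : degree N ≤ degree f := by
        rw [hNdegree, degree_eq_natDegree hfm.ne_zero, hfd]
        exact_mod_cast he
      rw [Finset.mem_product]
      constructor
      · rw [hA, Set.Finite.mem_toFinset]
        refine ⟨?_, ?_⟩
        · unfold Polynomial.Monic
          rw [leadingCoeff_divByMonic_of_monic hN hdle]
          exact hfm
        · rw [natDegree_divByMonic f hN, hfd]
      · rw [hB, Set.Finite.mem_toFinset]
        simp only [SetLike.mem_coe, mem_degreeLT]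
        rw [← hNdegree]
        exact degree_modByMonic_lt f hN
    · intro p hp
      rw [Finset.mem_product, hA, hB, Set.Finite.mem_toFinset, Set.Finite.mem_toFinset] at hp
      obtain ⟨⟨h1m, h1d⟩, h2⟩ := hp
      simp only [SetLike.mem_coe, mem_degreeLT] at h2
      have hmul : (p.1 * N).Monic := h1m.mul hN
      have hmuldeg : (p.1 * N).natDegree = e := by
        rw [h1m.natDegree_mul hN, h1d]
        omega
      have hlt : degree p.2 < degree (p.1 * N) := by
        rw [degree_eq_natDegree hmul.ne_zero, hmuldeg]
        calc degree p.2 < ((d : ℕ) : WithBot ℕ) := h2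
        _ ≤ ((e : ℕ) : WithBot ℕ) := by exact_mod_cast he
      rw [Set.Finite.mem_toFinset]
      refine ⟨hmul.add_of_left hlt, ?_⟩
      rw [← hmuldeg]
      exact natDegree_eq_of_degree_eq (degree_add_eq_left_of_degree_lt hlt)
    · intro f hf
      show f /ₘ N * N + f %ₘ N = f
      rw [mul_comm, add_comm]
      exact modByMonic_add_div f N
    · intro p hp
      rw [Finset.mem_product] at hp
      have h2 : degree p.2 < ((d : ℕ) : WithBot ℕ) :=
        mem_degreeLT.mp ((hdegLT d).mem_toFinset.mp hp.2)
      have h2' : degree p.2 < degree N := by rw [hNdegree]; exact h2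
      obtain ⟨hdiv, hmod⟩ := div_modByMonic_unique (f := p.1 * N + p.2) p.1 p.2 hN
        ⟨by ring, h2'⟩
      exact Prod.ext hdiv hmod
    · intro f hf
      show polyJacobiSym f N = polyJacobiSym (f /ₘ N * N + f %ₘ N) N
      refine polyJacobiSym_congr ?_
      rw [Ideal.Quotient.eq, Ideal.mem_span_singleton]
      exact ⟨0, by linear_combination -(modByMonic_add_div f N)⟩
  rw [step1]
  have step2 : ∀ p ∈ A ×ˢ B, polyJacobiSym (p.1 * N + p.2) N = polyJacobiSym p.2 N := by
    intro p _
    refine polyJacobiSym_congr ?_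
    rw [Ideal.Quotient.eq, Ideal.mem_span_singleton]
    exact ⟨p.1, by ring⟩
  rw [Finset.sum_congr rfl step2, Finset.sum_product]
  simp [hinner]
end
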